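/- Suppose a symmetric incentive-compatible probabilistic mechanism assigns probability μ ∈ [0,1] to each node of A in graph G and (by IC and symmetry) probability μ to each node of B in graph G'. Then on the pair of graphs (G, G') of the above construction, the minimum of the two coincidence values is at most 1 − μ(1−α) and at most α + μ(1−α) respectively, and therefore min over both graphs is at most (1+α)/2, achieved at μ = 1/2. -/

import Mathlib

open Finset
open scoped Classical

/-- The in-edges of a node `x` in the edge set `E`. -/
def inEdges {V : Type*} [DecidableEq V] (E : Finset (V × V)) (x : V) : Finset (V × V) :=
  E.filter (fun e => e.2 = x)

/-- The out-edges of a node `x` in the edge set `E`. -/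
def outEdges {V : Type*} [DecidableEq V] (E : Finset (V × V)) (x : V) : Finset (V × V) :=
  E.filter (fun e => e.1 = x)

/-- The score of a node: the average of the weights of its in-edges, 0 if it has none. -/
noncomputable def score {V : Type*} [DecidableEq V] (E : Finset (V × V)) (w : V × V → ℝ)
    (x : V) : ℝ :=
  if inEdges E x = ∅ then 0 else (∑ e ∈ inEdges E x, w e) / (inEdges E x).card

/-- The ranking of a node: the number of nodes with strictly greater score. -/
noncomputable def rank {V : Type*} [Fintype V] [DecidableEq V] (E : Finset (V × V))
    (w : V × V → ℝ) (x : V) : ℕ :=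
  (Finset.univ.filter (fun y => score E w y > score E w x)).card

/-- On the constructed pair of graphs (G, G'), if a symmetric IC probabilistic
mechanism assigns probability μ to every node of A in G and (by IC and symmetry) probability
μ to every node of B in G', then the coincidence of the mechanism with I_α(G) is at most
1 − μ(1−α), its coincidence with I_α(G') is at most α + μ(1−α), and hence the minimum of the
two coincidence values is at most (1+α)/2. -/
theorem impossibility_half_plus_alpha {V : Type*} [Fintype V] [DecidableEq V]
    (E : Finset (V × V)) (w w' : V × V → ℝ) (n : ℕ) (α : ℝ)
    (hn : Fintype.card V = n) (hn0 : 0 < n) (hα0 : 0 < α) (hα1 : α < 1)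
    (v : V) (A B C : Finset V)
    (hAB : Disjoint A B) (hAC : Disjoint A C) (hBC : Disjoint B C)
    (hvA : v ∉ A) (hvB : v ∉ B) (hvC : v ∉ C)
    (hpart : Finset.univ = insert v (A ∪ B ∪ C))
    (hcardA : (A.card : ℝ) = (1 - α) * n / 2) (hcardB : (B.card : ℝ) = (1 - α) * n / 2)
    (hcardC : (C.card : ℝ) = α * n - 1)
    (hinv : inEdges E v = (A ∪ B).image (fun a => (a, v)))
    (hinAB : ∀ a ∈ A ∪ B, inEdges E a = ∅)
    (hinC : ∀ c ∈ C, inEdges E c ≠ ∅ ∧ ∀ e ∈ inEdges E c, w e = 1 ∧ e.1 ∈ C)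
    (hwA : ∀ a ∈ A, w (a, v) = 1)
    (hwB : ∀ b ∈ B, w (b, v) = -1 + 1 / ((1 - α) * n))
    (a₀ : V) (ha₀ : a₀ ∈ A)
    (hw' : ∀ e, w' e = if e = (a₀, v) then -1 + 1 / ((1 - α) * n) else w e)
    (hlarge : 1 / ((1 - α) * n) < 3 / 2)
    (μ : ℝ) (hμ0 : 0 ≤ μ) (hμ1 : μ ≤ 1)
    (p p' : V → ℝ)
    (hp : ∀ x, 0 ≤ p x ∧ p x ≤ 1) (hp' : ∀ x, 0 ≤ p' x ∧ p' x ≤ 1)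
    (hpA : ∀ a ∈ A, p a = μ) (hp'B : ∀ b ∈ B, p' b = μ) :
    (1 / (n : ℝ)) * ∑ x : V, (2 * p x - 1) *
        (if (rank E w x : ℝ) < α * n then (1 : ℝ) else -1) ≤ 1 - μ * (1 - α) ∧
      (1 / (n : ℝ)) * ∑ x : V, (2 * p' x - 1) *
          (if (rank E w' x : ℝ) < α * n then (1 : ℝ) else -1) ≤ α + μ * (1 - α) ∧
      min ((1 / (n : ℝ)) * ∑ x : V, (2 * p x - 1) *
            (if (rank E w x : ℝ) < α * n then (1 : ℝ) else -1))
          ((1 / (n : ℝ)) * ∑ x : V, (2 * p' x - 1) *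
            (if (rank E w' x : ℝ) < α * n then (1 : ℝ) else -1))
        ≤ (1 + α) / 2 := by

  classical
  have hposn : (0:ℝ) < n := by exact_mod_cast hn0
  have hAcard1 : 1 ≤ A.card := Finset.card_pos.mpr ⟨a₀, ha₀⟩
  have h1αn : (0:ℝ) < (1 - α) * n := by
    have h1 : (1:ℝ) ≤ (1-α)*n/2 := by rw [← hcardA]; exact_mod_cast hAcard1
    linarith
  have hABcard : (A.card : ℝ) = (B.card : ℝ) := by rw [hcardA, hcardB]
  set t : ℝ := 1 / ((1-α)*n) with ht
  have htpos : 0 < t := by positivity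
  have hvAB : v ∉ A ∪ B := by simp [hvA, hvB]
  have ha₀v : a₀ ∈ A ∪ B := Finset.mem_union_left _ ha₀
  have hABne0 : (A ∪ B).card ≠ 0 := Finset.card_ne_zero_of_mem ha₀v
  have hABcpos : (0:ℝ) < ((A ∪ B).card : ℝ) := by positivity
  have hinvne : inEdges E v ≠ ∅ := by
    rw [hinv]
    simp only [ne_eq, Finset.image_eq_empty]
    exact Finset.nonempty_iff_ne_empty.mp ⟨a₀, ha₀v⟩
  have hinj : ∀ a ∈ A ∪ B, ∀ b ∈ A ∪ B, (fun a : V => (a, v)) a = (fun a : V => (a, v)) b → a = b := by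
    intro a _ b _ h; simpa using h
  have hcardIn : ((inEdges E v).card : ℝ) = ((A ∪ B).card : ℝ) := by
    rw [hinv, Finset.card_image_of_injOn hinj]
  -- scores in G
  have hscoreAB : ∀ x ∈ A ∪ B, score E w x = 0 := by
    intro x hx; simp [score, hinAB x hx]
  have hscoreC : ∀ c ∈ C, score E w c = 1 := by
    intro c hc
    obtain ⟨hne, hall⟩ := hinC c hc
    have hsum : ∑ e ∈ inEdges E c, w e = (inEdges E c).card := by
      rw [Finset.sum_congr rfl (fun e he => (hall e he).1)]
      simp
    have hc0 : ((inEdges E c).card : ℝ) ≠ 0 := by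
      simpa using Finset.card_ne_zero_of_mem
        (Finset.nonempty_iff_ne_empty.mpr hne).choose_spec
    simp [score, hne, hsum, div_self hc0]
  have hBt : (B.card : ℝ) * t = 1/2 := by
    rw [hcardB, ht, mul_one_div, div_eq_iff h1αn.ne']; ring
  have hsumv : ∑ e ∈ inEdges E v, w e = 1/2 := by
    rw [hinv, Finset.sum_image hinj, Finset.sum_union hAB,
        Finset.sum_congr rfl (fun a ha => hwA a ha),
        Finset.sum_congr rfl (fun b hb => hwB b hb)]
    simp only [Finset.sum_const, nsmul_eq_mul, mul_one]
    have hmul : (B.card:ℝ) * (-1+t) = -(B.card:ℝ) + 1/2 := by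
      rw [mul_add, mul_neg_one, hBt]
    linarith [hABcard, hmul]
  have hscoreV : score E w v = (1/2) / ((A ∪ B).card : ℝ) := by
    rw [score, if_neg hinvne, hsumv, hcardIn]
  have hscoreVpos : 0 < score E w v := by
    rw [hscoreV]; positivity
  -- rank in G for nodes of A ∪ B
  have hrankAB : ∀ x ∈ A ∪ B, rank E w x = C.card + 1 := by
    intro x hx
    have hfil : Finset.univ.filter (fun y => score E w y > score E w x) = insert v C := by
      ext y
      simp only [Finset.mem_filter, Finset.mem_univ, true_and, Finset.mem_insert]
      rw [hscoreAB x hx]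
      constructor
      · intro hy
        have hy2 : y ∈ insert v (A ∪ B ∪ C) := hpart ▸ Finset.mem_univ y
        rcases Finset.mem_insert.mp hy2 with h | h
        · exact Or.inl h
        · rcases Finset.mem_union.mp h with h | h
          · rw [hscoreAB y h] at hy; exact absurd hy (lt_irrefl 0)
          · exact Or.inr h
      · rintro (rfl | hy)
        · exact hscoreVpos
        · rw [hscoreC y hy]; norm_num
    rw [rank, hfil, Finset.card_insert_of_notMem hvC]
  have hCc1 : (C.card : ℝ) + 1 = α * n := by rw [hcardC]; ring
  -- scores in G'
  have hscoreAB' : ∀ x ∈ A ∪ B, score E w' x = 0 := by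
    intro x hx; simp [score, hinAB x hx]
  have hscoreC' : ∀ c ∈ C, score E w' c = 1 := by
    intro c hc
    obtain ⟨hne, hall⟩ := hinC c hc
    have hsum : ∑ e ∈ inEdges E c, w' e = (inEdges E c).card := by
      have hco : ∀ e ∈ inEdges E c, w' e = 1 := by
        intro e he
        have he2 : e.2 = c := (Finset.mem_filter.mp he).2
        have hnev : e ≠ (a₀, v) := by
          intro h
          have hvc : v = c := by rw [h] at he2; exact he2
          exact hvC (by rw [hvc]; exact hc)
        rw [hw' e, if_neg hnev]
        exact (hall e he).1
      rw [Finset.sum_congr rfl hco]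
      simp
    have hc0 : ((inEdges E c).card : ℝ) ≠ 0 := by
      simpa using Finset.card_ne_zero_of_mem
        (Finset.nonempty_iff_ne_empty.mpr hne).choose_spec
    simp [score, hne, hsum, div_self hc0]
  have hsumv' : ∑ e ∈ inEdges E v, w' e = t - 3/2 := by
    rw [hinv, Finset.sum_image hinj, Finset.sum_union hAB]
    have hBpart : ∑ b ∈ B, w' (b, v) = (B.card : ℝ) * (-1 + t) := by
      have hco : ∀ b ∈ B, w' (b, v) = -1 + t := by
        intro b hb
        have hb' : (b, v) ≠ (a₀, v) := by
          intro h
          have hba : b = a₀ := by simpa using h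
          exact (Finset.disjoint_left.mp hAB ha₀) (hba ▸ hb)
        rw [hw' (b, v), if_neg hb', hwB b hb]
      rw [Finset.sum_congr rfl hco]
      simp only [Finset.sum_const, nsmul_eq_mul]
    have hApart : ∑ a ∈ A, w' (a, v) = (-1 + t) + ((A.card : ℝ) - 1) := by
      rw [← Finset.add_sum_erase A _ ha₀]
      have h1 : w' (a₀, v) = -1 + t := by rw [hw' (a₀, v), if_pos rfl, ht]
      have h2 : ∑ a ∈ A.erase a₀, w' (a, v) = ((A.card : ℝ) - 1) := by
        have hco : ∀ a ∈ A.erase a₀, w' (a, v) = 1 := by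
          intro a ha
          have ha1 : a ≠ a₀ := (Finset.mem_erase.mp ha).1
          have ha2 : a ∈ A := (Finset.mem_erase.mp ha).2
          have hnev : (a, v) ≠ (a₀, v) := by simp [ha1]
          rw [hw' (a, v), if_neg hnev]
          exact hwA a ha2
        rw [Finset.sum_congr rfl hco]
        simp only [Finset.sum_const, nsmul_eq_mul, mul_one]
        rw [Finset.card_erase_of_mem ha₀]
        have h1le : (1:ℕ) ≤ A.card := hAcard1
        push_cast [h1le]
        ring
      rw [h1, h2]
    rw [hApart, hBpart]
    have hmul : (B.card:ℝ) * (-1+t) = -(B.card:ℝ) + 1/2 := by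
      rw [mul_add, mul_neg_one, hBt]
    linarith [hABcard, hmul]
  have hscoreV'neg : score E w' v < 0 := by
    rw [score, if_neg hinvne, hsumv', hcardIn]
    apply div_neg_of_neg_of_pos _ hABcpos
    linarith [hlarge]
  -- rank in G' for nodes of A ∪ B
  have hrankAB' : ∀ x ∈ A ∪ B, rank E w' x = C.card := by
    intro x hx
    have hfil : Finset.univ.filter (fun y => score E w' y > score E w' x) = C := by
      ext y
      simp only [Finset.mem_filter, Finset.mem_univ, true_and]
      rw [hscoreAB' x hx]
      constructor
      · intro hy
        have hy2 : y ∈ insert v (A ∪ B ∪ C) := hpart ▸ Finset.mem_univ y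
        rcases Finset.mem_insert.mp hy2 with h | h
        · subst h; linarith [hscoreV'neg]
        · rcases Finset.mem_union.mp h with h | h
          · rw [hscoreAB' y h] at hy; exact absurd hy (lt_irrefl 0)
          · exact h
      · intro hy
        rw [hscoreC' y hy]; norm_num
    rw [rank, hfil]
  -- the first sum bound
  have hsum1 : ∑ x : V, (2 * p x - 1) *
      (if (rank E w x : ℝ) < α * n then (1 : ℝ) else -1)
      ≤ ∑ x : V, (if x ∈ A then 1 - 2*μ else 1) := by
    apply Finset.sum_le_sum
    intro x _
    by_cases hx : x ∈ A
    · rw [if_pos hx]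
      have hr : rank E w x = C.card + 1 := hrankAB x (Finset.mem_union_left _ hx)
      have hng : ¬ ((rank E w x : ℝ) < α * n) := by
        rw [hr]; push_cast; rw [hCc1]; exact lt_irrefl _
      rw [if_neg hng, hpA x hx]; exact le_of_eq (by ring)
    · rw [if_neg hx]
      have h1 := (hp x).1; have h2 := (hp x).2
      by_cases hc : (rank E w x : ℝ) < α * n
      · rw [if_pos hc, mul_one]; linarith [h2]
      · rw [if_neg hc, mul_neg_one, neg_sub]; linarith [h1]
  have hsum2 : ∑ x : V, (2 * p' x - 1) *
      (if (rank E w' x : ℝ) < α * n then (1 : ℝ) else -1)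
      ≤ ∑ x : V, (if x ∈ B then 2*μ - 1 else 1) := by
    apply Finset.sum_le_sum
    intro x _
    by_cases hx : x ∈ B
    · rw [if_pos hx]
      have hr : rank E w' x = C.card := hrankAB' x (Finset.mem_union_right _ hx)
      have hg : (rank E w' x : ℝ) < α * n := by
        rw [hr, hcardC]; linarith
      rw [if_pos hg, hp'B x hx]; exact le_of_eq (by ring)
    · rw [if_neg hx]
      have h1 := (hp' x).1; have h2 := (hp' x).2
      by_cases hc : (rank E w' x : ℝ) < α * n
      · rw [if_pos hc, mul_one]; linarith [h2]
      · rw [if_neg hc, mul_neg_one, neg_sub]; linarith [h1]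
  -- evaluate the bounding sums
  have hcount : ∀ (s : Finset V) (c : ℝ),
      ∑ x : V, (if x ∈ s then c else 1) = (s.card : ℝ) * c + ((n : ℝ) - s.card) := by
    intro s c
    rw [Finset.sum_ite]
    simp only [Finset.sum_const, nsmul_eq_mul, mul_one]
    have h1 : Finset.univ.filter (fun x => x ∈ s) = s := by
      ext y; simp
    have hadd := Finset.card_filter_add_card_filter_not
      (s := Finset.univ) (p := fun x => x ∈ s)
    rw [h1, Finset.card_univ, hn] at hadd
    have h2 : (Finset.univ.filter (fun x => ¬ x ∈ s)).card = n - s.card := by omega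
    rw [h1, h2]
    have hle : s.card ≤ n := by rw [← hn]; exact Finset.card_le_univ s
    push_cast [hle]
    ring
  have hne : (n : ℝ) ≠ 0 := ne_of_gt hposn
  have hB1 : ∑ x : V, (if x ∈ A then 1 - 2*μ else 1) = (n : ℝ) - 2*μ*A.card := by
    rw [hcount]; ring
  have hB2 : ∑ x : V, (if x ∈ B then 2*μ - 1 else 1) = (n : ℝ) - 2*B.card + 2*μ*B.card := by
    rw [hcount]; ring
  have hfin1 : (1 / (n : ℝ)) * ∑ x : V, (2 * p x - 1) *
      (if (rank E w x : ℝ) < α * n then (1 : ℝ) else -1) ≤ 1 - μ * (1 - α) := by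
    have h := hsum1
    rw [hB1] at h
    have h2 : (1 / (n : ℝ)) * ∑ x : V, (2 * p x - 1) *
        (if (rank E w x : ℝ) < α * n then (1 : ℝ) else -1)
        ≤ (1 / (n : ℝ)) * ((n : ℝ) - 2*μ*A.card) := by
      apply mul_le_mul_of_nonneg_left h (by positivity)
    refine h2.trans (le_of_eq ?_)
    rw [hcardA]
    field_simp
  have hfin2 : (1 / (n : ℝ)) * ∑ x : V, (2 * p' x - 1) *
      (if (rank E w' x : ℝ) < α * n then (1 : ℝ) else -1) ≤ α + μ * (1 - α) := by
    have h := hsum2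
    rw [hB2] at h
    have h2 : (1 / (n : ℝ)) * ∑ x : V, (2 * p' x - 1) *
        (if (rank E w' x : ℝ) < α * n then (1 : ℝ) else -1)
        ≤ (1 / (n : ℝ)) * ((n : ℝ) - 2*B.card + 2*μ*B.card) := by
      apply mul_le_mul_of_nonneg_left h (by positivity)
    refine h2.trans (le_of_eq ?_)
    rw [hcardB]
    field_simp
    ring
  refine ⟨hfin1, hfin2, ?_⟩
  rcases le_total (1 - μ * (1 - α)) ((1+α)/2) with h | h
  · exact le_trans (min_le_left _ _) (hfin1.trans h)
  · exact le_trans (min_le_right _ _) (hfin2.trans (by linarith))
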